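/- Let X be n×k of rank k, Ω = X Γ X^T + X Ξ Z^T + Z Ξ^T X^T + Z Δ Z^T an n×n positive definite matrix in the representation of Lemma (Orep), and K₁, K₂ k×k positive semidefinite. Define S = (Ω + X K₁ X^T)^{-1} and T = (I_n + X K₂ X^T)^{-1}. Then S Ω S = T T (equivalently, RSS_{BL}(Ω,K₁) = RSS_{BL}(I_n,K₂) for all y) if and only if Ξ = 0, Δ = (Z^T Z)^{-1} (i.e., Ω = X Γ X^T + Z (Z^T Z)^{-1} Z^T), and (Γ + K₁) Γ^{-1} (Γ + K₁) = [(X^T X)^{-1} + K₂] X^T X [(X^T X)^{-1} + K₂]. -/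

import Mathlib

open Matrix

lemma aux_isUnit {m : ℕ} (A : Matrix (Fin m) (Fin m) ℝ) (h : A.rank = m) : IsUnit A := by
  rw [← Matrix.mulVec_surjective_iff_isUnit]
  have hr : LinearMap.range A.mulVecLin = ⊤ := by
    apply Submodule.eq_top_of_finrank_eq
    rw [← Matrix.rank, h]
    simp
  intro y
  obtain ⟨x, hx⟩ := LinearMap.range_eq_top.mp hr y
  exact ⟨x, by simpa [Matrix.mulVecLin_apply] using hx⟩

lemma aux_one {n k m : ℕ} (hkm : k + m = n)
    (X : Matrix (Fin n) (Fin k) ℝ) (Z : Matrix (Fin n) (Fin m) ℝ)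
    (hXZ : Xᵀ * Z = 0) (hZX : Zᵀ * X = 0)
    (hM : IsUnit (Xᵀ * X)) (hN : IsUnit (Zᵀ * Z)) :
    X * (Xᵀ * X)⁻¹ * Xᵀ + Z * (Zᵀ * Z)⁻¹ * Zᵀ = 1 := by
  have e : Fin n ≃ Fin k ⊕ Fin m := (finCongr hkm.symm).trans finSumFinEquiv.symm
  have e1 : (Xᵀ * X)⁻¹ * Xᵀ * X = 1 := by
    rw [Matrix.mul_assoc, Matrix.nonsing_inv_mul _ ((Matrix.isUnit_iff_isUnit_det _).mp hM)]
  have e2 : (Xᵀ * X)⁻¹ * Xᵀ * Z = 0 := by rw [Matrix.mul_assoc, hXZ, Matrix.mul_zero]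
  have e3 : (Zᵀ * Z)⁻¹ * Zᵀ * X = 0 := by rw [Matrix.mul_assoc, hZX, Matrix.mul_zero]
  have e4 : (Zᵀ * Z)⁻¹ * Zᵀ * Z = 1 := by
    rw [Matrix.mul_assoc, Matrix.nonsing_inv_mul _ ((Matrix.isUnit_iff_isUnit_det _).mp hN)]
  have h2 : fromRows ((Xᵀ * X)⁻¹ * Xᵀ) ((Zᵀ * Z)⁻¹ * Zᵀ) * fromCols X Z = 1 := by
    rw [fromRows_mul_fromCols, e1, e2, e3, e4, fromBlocks_one]
  have h3 := (fromCols_mul_fromRows_eq_one_comm e X Z _ _).mpr h2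
  rw [fromCols_mul_fromRows] at h3
  rw [Matrix.mul_assoc, Matrix.mul_assoc]
  exact h3

lemma aux_cancel {k m : ℕ} {M : Matrix (Fin k) (Fin k) ℝ} {N : Matrix (Fin m) (Fin m) ℝ}
    (hM : IsUnit M) (hN : IsUnit N) {a b : Matrix (Fin k) (Fin m) ℝ}
    (h : M * a * N = M * b * N) : a = b := by
  have hM' := (Matrix.isUnit_iff_isUnit_det M).mp hM
  have hN' := (Matrix.isUnit_iff_isUnit_det N).mp hN
  have key : ∀ c : Matrix (Fin k) (Fin m) ℝ, M⁻¹ * (M * c * N) * N⁻¹ = c := by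
    intro c
    rw [Matrix.mul_assoc M c N, Matrix.nonsing_inv_mul_cancel_left _ _ hM',
      Matrix.mul_nonsing_inv_cancel_right _ _ hN']
  rw [← key a, h, key b]

lemma aux_rep {n k m : ℕ}
    (X : Matrix (Fin n) (Fin k) ℝ) (Z : Matrix (Fin n) (Fin m) ℝ)
    (hXZ : Xᵀ * Z = 0) (hZX : Zᵀ * X = 0)
    (hM : IsUnit (Xᵀ * X)) (hN : IsUnit (Zᵀ * Z))
    {a a' : Matrix (Fin k) (Fin k) ℝ} {b b' : Matrix (Fin k) (Fin m) ℝ}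
    {c c' : Matrix (Fin m) (Fin k) ℝ} {d d' : Matrix (Fin m) (Fin m) ℝ}
    (h : X * a * Xᵀ + X * b * Zᵀ + Z * c * Xᵀ + Z * d * Zᵀ
       = X * a' * Xᵀ + X * b' * Zᵀ + Z * c' * Xᵀ + Z * d' * Zᵀ) :
    a = a' ∧ b = b' ∧ c = c' ∧ d = d' := by
  have hXZa : ∀ {p : ℕ} (Y : Matrix (Fin m) (Fin p) ℝ), Xᵀ * (Z * Y) = 0 := by
    intro p Y; rw [← Matrix.mul_assoc, hXZ, Matrix.zero_mul]
  have hZXa : ∀ {p : ℕ} (Y : Matrix (Fin k) (Fin p) ℝ), Zᵀ * (X * Y) = 0 := by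
    intro p Y; rw [← Matrix.mul_assoc, hZX, Matrix.zero_mul]
  refine ⟨?_, ?_, ?_, ?_⟩
  · refine aux_cancel hM hM ?_
    have := congrArg (fun U => Xᵀ * U * X) h
    simpa [Matrix.mul_add, Matrix.add_mul, Matrix.mul_assoc, hXZa, hZXa, hXZ, hZX] using this
  · refine aux_cancel hM hN ?_
    have := congrArg (fun U => Xᵀ * U * Z) h
    simpa [Matrix.mul_add, Matrix.add_mul, Matrix.mul_assoc, hXZa, hZXa, hXZ, hZX] using this
  · refine aux_cancel hN hM ?_
    have := congrArg (fun U => Zᵀ * U * X) h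
    simpa [Matrix.mul_add, Matrix.add_mul, Matrix.mul_assoc, hXZa, hZXa, hXZ, hZX] using this
  · refine aux_cancel hN hN ?_
    have := congrArg (fun U => Zᵀ * U * Z) h
    simpa [Matrix.mul_add, Matrix.add_mul, Matrix.mul_assoc, hXZa, hZXa, hXZ, hZX] using this

set_option maxHeartbeats 1000000 in
theorem stmt_16 {n k : ℕ} (hnk : k < n)
    (X : Matrix (Fin n) (Fin k) ℝ) (hX : X.rank = k)
    (Z : Matrix (Fin n) (Fin (n - k)) ℝ) (hXZ : Xᵀ * Z = 0) (hZ : Z.rank = n - k)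
    (Γ : Matrix (Fin k) (Fin k) ℝ) (hΓ : Γ.PosDef)
    (Δ : Matrix (Fin (n - k)) (Fin (n - k)) ℝ) (hΔ : Δ.PosDef)
    (Ξ : Matrix (Fin k) (Fin (n - k)) ℝ)
    (Ω : Matrix (Fin n) (Fin n) ℝ)
    (hΩrep : Ω = X * Γ * Xᵀ + X * Ξ * Zᵀ + Z * Ξᵀ * Xᵀ + Z * Δ * Zᵀ)
    (hΩ : Ω.PosDef)
    (K₁ K₂ : Matrix (Fin k) (Fin k) ℝ) (hK₁ : K₁.PosSemidef) (hK₂ : K₂.PosSemidef)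
    (S T : Matrix (Fin n) (Fin n) ℝ)
    (hS : S = (Ω + X * K₁ * Xᵀ)⁻¹) (hT : T = (1 + X * K₂ * Xᵀ)⁻¹) :
    S * Ω * S = T * T ↔
      (Ξ = 0 ∧ Δ = (Zᵀ * Z)⁻¹ ∧
        (Γ + K₁) * Γ⁻¹ * (Γ + K₁) =
          ((Xᵀ * X)⁻¹ + K₂) * (Xᵀ * X) * ((Xᵀ * X)⁻¹ + K₂)) := by
  -- basic facts
  -- basic facts
  have hZX : Zᵀ * X = 0 := by
    have := congrArg Matrix.transpose hXZ
    simpa using this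
  have hM : IsUnit (Xᵀ * X) := aux_isUnit _ (by rw [Matrix.rank_transpose_mul_self, hX])
  have hN : IsUnit (Zᵀ * Z) := aux_isUnit _ (by rw [Matrix.rank_transpose_mul_self, hZ])
  have hMd := (Matrix.isUnit_iff_isUnit_det _).mp hM
  have hNd := (Matrix.isUnit_iff_isUnit_det _).mp hN
  have hΓd := (Matrix.isUnit_iff_isUnit_det _).mp hΓ.isUnit
  have hΩd := (Matrix.isUnit_iff_isUnit_det _).mp hΩ.isUnit
  have h1 : X * (Xᵀ * X)⁻¹ * Xᵀ + Z * (Zᵀ * Z)⁻¹ * Zᵀ = 1 :=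
    aux_one (Nat.add_sub_cancel' hnk.le) X Z hXZ hZX hM hN
  -- associativity-adapted cancellation lemmas
  have hXZa : ∀ {p : ℕ} (Y : Matrix (Fin (n - k)) (Fin p) ℝ), Xᵀ * (Z * Y) = 0 := by
    intro p Y; rw [← Matrix.mul_assoc, hXZ, Matrix.zero_mul]
  have hZXa : ∀ {p : ℕ} (Y : Matrix (Fin k) (Fin p) ℝ), Zᵀ * (X * Y) = 0 := by
    intro p Y; rw [← Matrix.mul_assoc, hZX, Matrix.zero_mul]
  have eΩl : Ω * Ω⁻¹ = 1 := Matrix.mul_nonsing_inv _ hΩd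
  have eΩr : Ω⁻¹ * Ω = 1 := Matrix.nonsing_inv_mul _ hΩd
  have eΩ1 : ∀ {p : ℕ} (Y : Matrix (Fin n) (Fin p) ℝ), Ω * (Ω⁻¹ * Y) = Y := by
    intro p Y; rw [← Matrix.mul_assoc, eΩl, Matrix.one_mul]
  have eΩ2 : ∀ {p : ℕ} (Y : Matrix (Fin n) (Fin p) ℝ), Ω⁻¹ * (Ω * Y) = Y := by
    intro p Y; rw [← Matrix.mul_assoc, eΩr, Matrix.one_mul]
  have eM1 : (Xᵀ * X) * (Xᵀ * X)⁻¹ = 1 := Matrix.mul_nonsing_inv _ hMd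
  have eM2 : (Xᵀ * X)⁻¹ * (Xᵀ * X) = 1 := Matrix.nonsing_inv_mul _ hMd
  have eN2 : (Zᵀ * Z)⁻¹ * (Zᵀ * Z) = 1 := Matrix.nonsing_inv_mul _ hNd
  have eΓ1g : Γ * Γ⁻¹ = 1 := Matrix.mul_nonsing_inv _ hΓd
  have eΓ2g : Γ⁻¹ * Γ = 1 := Matrix.nonsing_inv_mul _ hΓd
  have eΓ1 : ∀ {p : ℕ} (Y : Matrix (Fin k) (Fin p) ℝ), Γ * (Γ⁻¹ * Y) = Y := by
    intro p Y; rw [← Matrix.mul_assoc, eΓ1g, Matrix.one_mul]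
  have eΓ2 : ∀ {p : ℕ} (Y : Matrix (Fin k) (Fin p) ℝ), Γ⁻¹ * (Γ * Y) = Y := by
    intro p Y; rw [← Matrix.mul_assoc, eΓ2g, Matrix.one_mul]
  have eXM : ∀ {p : ℕ} (Y : Matrix (Fin k) (Fin p) ℝ), Xᵀ * (X * ((Xᵀ * X)⁻¹ * Y)) = Y := by
    intro p Y; rw [← Matrix.mul_assoc, ← Matrix.mul_assoc, eM1, Matrix.one_mul]
  have eMc2 : ∀ {p : ℕ} (Y : Matrix (Fin k) (Fin p) ℝ), (Xᵀ * X)⁻¹ * ((Xᵀ * X) * Y) = Y := by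
    intro p Y; rw [← Matrix.mul_assoc, eM2, Matrix.one_mul]
  have eZN : ∀ {p : ℕ} (Y : Matrix (Fin (n - k)) (Fin p) ℝ),
      Zᵀ * (Z * ((Zᵀ * Z)⁻¹ * Y)) = Y := by
    intro p Y; rw [← Matrix.mul_assoc, ← Matrix.mul_assoc, Matrix.mul_nonsing_inv _ hNd,
      Matrix.one_mul]
  -- positive definiteness of A and B
  have hJ1 : (X * K₁ * Xᵀ).PosSemidef := by
    have := hK₁.mul_mul_conjTranspose_same X
    simpa using this
  have hJ2 : (X * K₂ * Xᵀ).PosSemidef := by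
    have := hK₂.mul_mul_conjTranspose_same X
    simpa using this
  have hA : (Ω + X * K₁ * Xᵀ).PosDef := hΩ.add_posSemidef hJ1
  have hB : ((1 : Matrix (Fin n) (Fin n) ℝ) + X * K₂ * Xᵀ).PosDef :=
    Matrix.PosDef.add_posSemidef Matrix.PosDef.one hJ2
  have hAd := (Matrix.isUnit_iff_isUnit_det _).mp hA.isUnit
  have hBd := (Matrix.isUnit_iff_isUnit_det _).mp hB.isUnit
  -- step 1 : S Ω S = T T ↔ A Ω⁻¹ A = B B
  have step1 : S * Ω * S = T * T ↔
      (Ω + X * K₁ * Xᵀ) * Ω⁻¹ * (Ω + X * K₁ * Xᵀ) =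
        (1 + X * K₂ * Xᵀ) * (1 + X * K₂ * Xᵀ) := by
    rw [hS, hT]
    constructor
    · intro h
      have h2 := congrArg (fun U : Matrix (Fin n) (Fin n) ℝ => U⁻¹) h
      simp only [Matrix.mul_inv_rev, Matrix.nonsing_inv_nonsing_inv _ hAd,
        Matrix.nonsing_inv_nonsing_inv _ hBd] at h2
      simpa [Matrix.mul_assoc] using h2
    · intro h
      have h2 := congrArg (fun U : Matrix (Fin n) (Fin n) ℝ => U⁻¹) h
      simp only [Matrix.mul_inv_rev, Matrix.nonsing_inv_nonsing_inv _ hΩd] at h2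
      simpa [Matrix.mul_assoc] using h2
  rw [step1]
  -- expansions
  have expand1 : (Ω + X * K₁ * Xᵀ) * Ω⁻¹ * (Ω + X * K₁ * Xᵀ)
      = Ω + X * K₁ * Xᵀ + X * K₁ * Xᵀ + X * (K₁ * (Xᵀ * Ω⁻¹ * X) * K₁) * Xᵀ := by
    simp only [Matrix.mul_add, Matrix.add_mul, Matrix.mul_assoc, eΩl, eΩr, eΩ1, eΩ2,
      Matrix.mul_one, Matrix.one_mul]
    abel
  have expand2 : ((1 : Matrix (Fin n) (Fin n) ℝ) + X * K₂ * Xᵀ) * (1 + X * K₂ * Xᵀ)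
      = 1 + X * K₂ * Xᵀ + X * K₂ * Xᵀ + X * (K₂ * (Xᵀ * X) * K₂) * Xᵀ := by
    simp only [Matrix.mul_add, Matrix.add_mul, Matrix.mul_assoc,
      Matrix.mul_one, Matrix.one_mul]
    abel
  have lΓ : (Γ + K₁) * Γ⁻¹ * (Γ + K₁) = Γ + (K₁ + K₁ + K₁ * Γ⁻¹ * K₁) := by
    simp only [Matrix.mul_add, Matrix.add_mul, Matrix.mul_assoc, eΓ1g, eΓ2g, eΓ1, eΓ2,
      Matrix.mul_one, Matrix.one_mul]
    abel
  have rM : ((Xᵀ * X)⁻¹ + K₂) * (Xᵀ * X) * ((Xᵀ * X)⁻¹ + K₂)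
      = (Xᵀ * X)⁻¹ + (K₂ + K₂ + K₂ * (Xᵀ * X) * K₂) := by
    simp only [Matrix.mul_add, Matrix.add_mul, Matrix.mul_assoc, eM1, eM2, eMc2,
      Matrix.mul_one, Matrix.one_mul]
    abel
  constructor
  · -- forward direction
    intro h
    have hrep : X * (Γ + (K₁ + K₁ + K₁ * (Xᵀ * Ω⁻¹ * X) * K₁)) * Xᵀ + X * Ξ * Zᵀ
          + Z * Ξᵀ * Xᵀ + Z * Δ * Zᵀ
        = X * ((Xᵀ * X)⁻¹ + (K₂ + K₂ + K₂ * (Xᵀ * X) * K₂)) * Xᵀ + X * (0 : Matrix (Fin k) (Fin (n - k)) ℝ) * Zᵀ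
          + Z * (0 : Matrix (Fin (n - k)) (Fin k) ℝ) * Xᵀ + Z * (Zᵀ * Z)⁻¹ * Zᵀ := by
      calc X * (Γ + (K₁ + K₁ + K₁ * (Xᵀ * Ω⁻¹ * X) * K₁)) * Xᵀ + X * Ξ * Zᵀ
            + Z * Ξᵀ * Xᵀ + Z * Δ * Zᵀ
          = Ω + X * K₁ * Xᵀ + X * K₁ * Xᵀ + X * (K₁ * (Xᵀ * Ω⁻¹ * X) * K₁) * Xᵀ := by
            rw [hΩrep]
            simp only [Matrix.mul_add, Matrix.add_mul, Matrix.mul_assoc]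
            abel
        _ = (Ω + X * K₁ * Xᵀ) * Ω⁻¹ * (Ω + X * K₁ * Xᵀ) := expand1.symm
        _ = (1 + X * K₂ * Xᵀ) * (1 + X * K₂ * Xᵀ) := h
        _ = 1 + X * K₂ * Xᵀ + X * K₂ * Xᵀ + X * (K₂ * (Xᵀ * X) * K₂) * Xᵀ := expand2
        _ = X * ((Xᵀ * X)⁻¹ + (K₂ + K₂ + K₂ * (Xᵀ * X) * K₂)) * Xᵀ + X * (0 : Matrix (Fin k) (Fin (n - k)) ℝ) * Zᵀ
            + Z * (0 : Matrix (Fin (n - k)) (Fin k) ℝ) * Xᵀ + Z * (Zᵀ * Z)⁻¹ * Zᵀ := by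
            rw [← h1]
            simp only [Matrix.mul_add, Matrix.add_mul, Matrix.mul_assoc,
              Matrix.mul_zero, Matrix.zero_mul]
            abel
    obtain ⟨ha, hb, hc, hd⟩ := aux_rep X Z hXZ hZX hM hN hrep
    have hΩ2 : Ω = X * Γ * Xᵀ + Z * (Zᵀ * Z)⁻¹ * Zᵀ := by
      rw [hΩrep, hb, hd]
      simp [Matrix.mul_zero, Matrix.zero_mul]
    have hΩinv : Ω⁻¹ = X * ((Xᵀ * X)⁻¹ * (Γ⁻¹ * (Xᵀ * X)⁻¹)) * Xᵀ + Z * (Zᵀ * Z)⁻¹ * Zᵀ := by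
      apply Matrix.inv_eq_right_inv
      rw [hΩ2, ← h1]
      simp only [Matrix.mul_add, Matrix.add_mul, Matrix.mul_assoc, hXZa, hZXa, hXZ, hZX,
        eXM, eZN, eΓ1, eΓ2, Matrix.mul_zero, Matrix.zero_mul, Matrix.mul_one, Matrix.one_mul,
        add_zero, zero_add]
    have hW : Xᵀ * Ω⁻¹ * X = Γ⁻¹ := by
      rw [hΩinv]
      simp only [Matrix.mul_add, Matrix.add_mul, Matrix.mul_assoc, hXZa, hZXa, hXZ, hZX,
        eXM, eZN, eM2, eMc2, Matrix.mul_zero, Matrix.zero_mul, Matrix.mul_one, Matrix.one_mul,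
        add_zero, zero_add]
    rw [hW] at ha
    refine ⟨hb, hd, ?_⟩
    rw [lΓ, rM]
    exact ha
  · -- backward direction
    rintro ⟨hb, hd, h3⟩
    have hΩ2 : Ω = X * Γ * Xᵀ + Z * (Zᵀ * Z)⁻¹ * Zᵀ := by
      rw [hΩrep, hb, hd]
      simp [Matrix.mul_zero, Matrix.zero_mul]
    have hΩinv : Ω⁻¹ = X * ((Xᵀ * X)⁻¹ * (Γ⁻¹ * (Xᵀ * X)⁻¹)) * Xᵀ + Z * (Zᵀ * Z)⁻¹ * Zᵀ := by
      apply Matrix.inv_eq_right_inv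
      rw [hΩ2, ← h1]
      simp only [Matrix.mul_add, Matrix.add_mul, Matrix.mul_assoc, hXZa, hZXa, hXZ, hZX,
        eXM, eZN, eΓ1, eΓ2, Matrix.mul_zero, Matrix.zero_mul, Matrix.mul_one, Matrix.one_mul,
        add_zero, zero_add]
    have hW : Xᵀ * Ω⁻¹ * X = Γ⁻¹ := by
      rw [hΩinv]
      simp only [Matrix.mul_add, Matrix.add_mul, Matrix.mul_assoc, hXZa, hZXa, hXZ, hZX,
        eXM, eZN, eM2, eMc2, Matrix.mul_zero, Matrix.zero_mul, Matrix.mul_one, Matrix.one_mul,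
        add_zero, zero_add]
    have ha : Γ + (K₁ + K₁ + K₁ * Γ⁻¹ * K₁)
        = (Xᵀ * X)⁻¹ + (K₂ + K₂ + K₂ * (Xᵀ * X) * K₂) := by
      rw [← lΓ, ← rM]; exact h3
    rw [expand1, expand2, hW]
    calc Ω + X * K₁ * Xᵀ + X * K₁ * Xᵀ + X * (K₁ * Γ⁻¹ * K₁) * Xᵀ
        = X * (Γ + (K₁ + K₁ + K₁ * Γ⁻¹ * K₁)) * Xᵀ + Z * (Zᵀ * Z)⁻¹ * Zᵀ := by
          rw [hΩ2]
          simp only [Matrix.mul_add, Matrix.add_mul, Matrix.mul_assoc]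
          abel
      _ = X * ((Xᵀ * X)⁻¹ + (K₂ + K₂ + K₂ * (Xᵀ * X) * K₂)) * Xᵀ + Z * (Zᵀ * Z)⁻¹ * Zᵀ := by
          rw [ha]
      _ = 1 + X * K₂ * Xᵀ + X * K₂ * Xᵀ + X * (K₂ * (Xᵀ * X) * K₂) * Xᵀ := by
          rw [← h1]
          simp only [Matrix.mul_add, Matrix.add_mul, Matrix.mul_assoc]
          abel
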